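/- arXiv:2106.12592 — 6 statements merged into one kernel-verified Lean document; each statement's English description precedes it below -/
import Mathlib

section
/- For every real η with 0 ≤ η ≤ 1, let M = K₀(Σ(η)⊗Γ(η))K₀ᴴ + K₁(Σ(η)⊗Γ(η))K₁ᴴ. Then the partial trace of M over the second factor equals Σ(η') with η' = η(25 − η²)/24, and the partial trace of M over the first factor equals Γ(η). -/
open Matrix Kronecker

noncomputable def SigmaState (η : ℝ) : Matrix (Fin 2) (Fin 2) ℂ :=
  !![1 / 2, η / 2; η / 2, 1 / 2]

noncomputable def GammaState (η : ℝ) : Matrix (Fin 2) (Fin 2) ℂ :=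
  !![(10 - η ^ 2) / 12, Real.sqrt 3 * η / 4;
     Real.sqrt 3 * η / 4, (2 + η ^ 2) / 12]

/-- Kraus operator `K₀`, with the basis of `ℂ² ⊗ ℂ²` ordered as `|00⟩,|01⟩,|10⟩,|11⟩`. -/
noncomputable def KrausK0 : Matrix (Fin 2 × Fin 2) (Fin 2 × Fin 2) ℂ :=
  Matrix.reindex finProdFinEquiv.symm finProdFinEquiv.symm
    !![1, 0, 0, 0;
       0, 1 / 4, Real.sqrt 3 / 4, 0;
       0, Real.sqrt 3 / 4, 3 / 4, 0;
       0, 0, 0, 1]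

noncomputable def KrausK1 : Matrix (Fin 2 × Fin 2) (Fin 2 × Fin 2) ℂ :=
  Matrix.reindex finProdFinEquiv.symm finProdFinEquiv.symm
    !![0, 0, 0, 0;
       0, 0, 0, 0;
       0, -(Real.sqrt 3) / 2, 1 / 2, 0;
       0, 0, 0, 0]

/-- Partial trace over the second tensor factor. -/
noncomputable def ptrSecond (M : Matrix (Fin 2 × Fin 2) (Fin 2 × Fin 2) ℂ) :
    Matrix (Fin 2) (Fin 2) ℂ :=
  Matrix.of fun a b => ∑ c : Fin 2, M (a, c) (b, c)

/-- Partial trace over the first tensor factor. -/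
noncomputable def ptrFirst (M : Matrix (Fin 2 × Fin 2) (Fin 2 × Fin 2) ℂ) :
    Matrix (Fin 2) (Fin 2) ℂ :=
  Matrix.of fun a b => ∑ c : Fin 2, M (c, a) (c, b)

set_option maxHeartbeats 2000000 in
theorem amplification_channel_marginals (η : ℝ) (h0 : 0 ≤ η) (h1 : η ≤ 1) :
    ptrSecond (KrausK0 * (SigmaState η ⊗ₖ GammaState η) * KrausK0ᴴ
          + KrausK1 * (SigmaState η ⊗ₖ GammaState η) * KrausK1ᴴ)
        = SigmaState (η * (25 - η ^ 2) / 24) ∧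
    ptrFirst (KrausK0 * (SigmaState η ⊗ₖ GammaState η) * KrausK0ᴴ
          + KrausK1 * (SigmaState η ⊗ₖ GammaState η) * KrausK1ᴴ)
        = GammaState η := by
  have hs2 : ((Real.sqrt 3 : ℝ) : ℂ) ^ 2 = 3 := by
    norm_cast
    exact Real.sq_sqrt (by norm_num)
  have hs3 : ((Real.sqrt 3 : ℝ) : ℂ) ^ 3 = 3 * ((Real.sqrt 3 : ℝ) : ℂ) := by
    rw [pow_succ, hs2]; try ring
  constructor <;> ext a b <;> fin_cases a <;> fin_cases b <;>
    simp [ptrSecond, ptrFirst, SigmaState, GammaState, KrausK0, KrausK1,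
      Matrix.mul_apply, Fintype.sum_prod_type, Fin.sum_univ_two,
      Matrix.kroneckerMap_apply, Matrix.reindex_apply, Matrix.submatrix_apply, finProdFinEquiv,
      Matrix.conjTranspose_apply, Matrix.add_apply, Complex.conj_ofReal,
      Matrix.vecHead, Matrix.vecTail, map_ofNat, map_inv₀, map_div₀, map_neg,
      _root_.map_one, map_zero, _root_.map_mul, Function.comp] <;>
    push_cast <;> ring_nf <;> (try simp only [hs2, hs3]) <;> (try ring_nf)
end

section
/- For every natural number m ≥ 1, setting L = 2m, the following inequality holds: (1/2^L) · Σ_{n=0}^{L−1} √( C(L,n) · C(L,n+1) ) ≥ 1 − C(L, m)/2^L, where C(L,n) denotes the binomial coefficient L choose n and the square roots are of real numbers. -/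
theorem overlap_bound_even (m : ℕ) (hm : 1 ≤ m) :
    (1 : ℝ) / 2 ^ (2 * m) *
        ∑ n ∈ Finset.range (2 * m),
          Real.sqrt ((((2 * m).choose n : ℝ)) * (((2 * m).choose (n + 1) : ℝ)))
      ≥ 1 - ((2 * m).choose m : ℝ) / 2 ^ (2 * m) := by
  set L := 2 * m with hL
  -- the key combinatorial identity on naturals
  have key : ∑ n ∈ Finset.range L, min (L.choose n) (L.choose (n + 1)) + L.choose m
      = 2 ^ L := by
    have h1 : ∑ n ∈ Finset.range L, min (L.choose n) (L.choose (n + 1)) =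
        ∑ n ∈ Finset.range L, (if n < m then L.choose n else L.choose (n + 1)) := by
      refine Finset.sum_congr rfl fun n hn => ?_
      simp only [Finset.mem_range] at hn
      split_ifs with h
      · exact min_eq_left (Nat.choose_le_succ_of_lt_half_left (by omega))
      · refine min_eq_right ?_
        have h1 : n + 1 ≤ L := hn
        have h2 : L.choose (L - (n + 1)) = L.choose (n + 1) := Nat.choose_symm h1
        have h3 : L.choose (L - n) = L.choose n := Nat.choose_symm (by omega)
        have h4 : L - n = (L - (n + 1)) + 1 := by omega
        have h5 : L.choose (L - (n + 1)) ≤ L.choose (L - (n + 1) + 1) :=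
          Nat.choose_le_succ_of_lt_half_left (by omega)
        rw [← h2, ← h3, h4]
        exact h5
    rw [h1]
    have hsplit : ∑ n ∈ Finset.range L, (if n < m then L.choose n else L.choose (n + 1)) =
        (∑ n ∈ Finset.range m, L.choose n) + ∑ n ∈ Finset.Ico m L, L.choose (n + 1) := by
      rw [Finset.range_eq_Ico, ← Finset.sum_Ico_consecutive _ (Nat.zero_le m) (by omega),
        ← Finset.range_eq_Ico]
      congr 1
      · exact Finset.sum_congr rfl fun n hn => by
          simp only [Finset.mem_range] at hn; simp [hn]
      · exact Finset.sum_congr rfl fun n hn => by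
          simp only [Finset.mem_Ico] at hn; simp [Nat.not_lt.mpr hn.1]
    have hshift : ∑ n ∈ Finset.Ico m L, L.choose (n + 1) =
        ∑ k ∈ Finset.Ico (m + 1) (L + 1), L.choose k := by
      rw [Finset.sum_Ico_eq_sum_range, Finset.sum_Ico_eq_sum_range]
      refine Finset.sum_congr (by congr 1; omega) fun i _ => by congr 1; omega
    have htotal : ∑ k ∈ Finset.range (L + 1), L.choose k = 2 ^ L :=
      Nat.sum_range_choose L
    have hR : ∑ k ∈ Finset.range (L + 1), L.choose k =
        (∑ n ∈ Finset.range m, L.choose n) + L.choose m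
          + ∑ k ∈ Finset.Ico (m + 1) (L + 1), L.choose k := by
      rw [Finset.range_eq_Ico, ← Finset.sum_Ico_consecutive _ (Nat.zero_le (m + 1)) (by omega),
        ← Finset.range_eq_Ico, Finset.sum_range_succ]
    rw [hsplit, hshift]
    omega
  -- pointwise bound: min ≤ sqrt of product
  have hpt : ∀ n ∈ Finset.range L,
      ((min (L.choose n) (L.choose (n + 1)) : ℕ) : ℝ) ≤
        Real.sqrt ((L.choose n : ℝ) * (L.choose (n + 1) : ℝ)) := by
    intro n _
    have hm0 : (0:ℝ) ≤ ((min (L.choose n) (L.choose (n + 1)) : ℕ) : ℝ) := by positivity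
    rw [show ((min (L.choose n) (L.choose (n + 1)) : ℕ) : ℝ) =
      Real.sqrt (((min (L.choose n) (L.choose (n + 1)) : ℕ) : ℝ) *
        ((min (L.choose n) (L.choose (n + 1)) : ℕ) : ℝ)) from (Real.sqrt_mul_self hm0).symm]
    refine Real.sqrt_le_sqrt ?_
    have h1 : ((min (L.choose n) (L.choose (n + 1)) : ℕ) : ℝ) ≤ (L.choose n : ℝ) := by
      exact_mod_cast min_le_left _ _
    have h2 : ((min (L.choose n) (L.choose (n + 1)) : ℕ) : ℝ) ≤ (L.choose (n + 1) : ℝ) := by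
      exact_mod_cast min_le_right _ _
    nlinarith
  have hsum : (2 ^ L - (L.choose m : ℝ)) ≤
      ∑ n ∈ Finset.range L, Real.sqrt ((L.choose n : ℝ) * (L.choose (n + 1) : ℝ)) := by
    calc (2 ^ L - (L.choose m : ℝ))
        = ∑ n ∈ Finset.range L, ((min (L.choose n) (L.choose (n + 1)) : ℕ) : ℝ) := by
          have := key
          have : ((∑ n ∈ Finset.range L, min (L.choose n) (L.choose (n + 1)) : ℕ) : ℝ)
              + (L.choose m : ℝ) = 2 ^ L := by exact_mod_cast congrArg (Nat.cast : ℕ → ℝ) key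
          push_cast at this ⊢
          linarith
      _ ≤ _ := Finset.sum_le_sum hpt
  have h2 : (0:ℝ) < 2 ^ L := by positivity
  rw [ge_iff_le]
  calc (1 : ℝ) - (L.choose m : ℝ) / 2 ^ L
      = (2 ^ L - (L.choose m : ℝ)) / 2 ^ L := by field_simp
    _ ≤ (∑ n ∈ Finset.range L, Real.sqrt ((L.choose n : ℝ) * (L.choose (n + 1) : ℝ))) / 2 ^ L := by
        gcongr
    _ = 1 / 2 ^ L * ∑ n ∈ Finset.range L, Real.sqrt ((L.choose n : ℝ) * (L.choose (n + 1) : ℝ)) := by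
        ring
end

section
/- For every natural number m ≥ 0, setting L = 2m+1, the following inequality holds: (1/2^L) · Σ_{n=0}^{L−1} √( C(L,n) · C(L,n+1) ) ≥ 1 − C(L, m+1)/2^L, where C(L,n) denotes the binomial coefficient L choose n and the square roots are of real numbers. -/
lemma odd_choose_min_sum (m : ℕ) :
    (∑ n ∈ Finset.range (2 * m + 1),
        min ((2 * m + 1).choose n) ((2 * m + 1).choose (n + 1)))
      + (2 * m + 1).choose (m + 1) = 2 ^ (2 * m + 1) := by
  have hmono : ∀ n, n ≤ m → (2 * m + 1).choose n ≤ (2 * m + 1).choose (n + 1) := by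
    intro n hn
    rcases eq_or_lt_of_le hn with h | h
    · subst h
      have h1 : (2 * n + 1).choose (n + 1) = (2 * n + 1).choose ((2 * n + 1) - (n + 1)) :=
        (Nat.choose_symm (by omega)).symm
      have h2 : (2 * n + 1) - (n + 1) = n := by omega
      rw [h1, h2]
    · exact Nat.choose_le_succ_of_lt_half_left (by omega)
  have hdec : ∀ n, m + 1 ≤ n → n ≤ 2 * m → (2 * m + 1).choose (n + 1) ≤ (2 * m + 1).choose n := by
    intro n h1 h2
    have e1 : (2 * m + 1).choose (n + 1) = (2 * m + 1).choose (2 * m - n) := by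
      rw [← Nat.choose_symm (by omega : n + 1 ≤ 2 * m + 1)]
      congr 1; omega
    have e2 : (2 * m + 1).choose n = (2 * m + 1).choose (2 * m + 1 - n) := by
      rw [← Nat.choose_symm (by omega : n ≤ 2 * m + 1)]
    rw [e1, e2]
    have := Nat.choose_le_succ_of_lt_half_left
      (by omega : 2 * m - n < (2 * m + 1) / 2) (n := 2 * m + 1)
    have h3 : 2 * m - n + 1 = 2 * m + 1 - n := by omega
    rwa [h3] at this
  have hsplit : ∑ n ∈ Finset.range (2 * m + 1),
      min ((2 * m + 1).choose n) ((2 * m + 1).choose (n + 1))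
      = (∑ n ∈ Finset.range (m + 1), (2 * m + 1).choose n)
        + ∑ n ∈ Finset.range m, (2 * m + 1).choose (m + 2 + n) := by
    rw [Finset.range_eq_Ico, ← Finset.sum_Ico_consecutive _ (by omega : 0 ≤ m + 1)
      (by omega : m + 1 ≤ 2 * m + 1)]
    congr 1
    · rw [← Finset.range_eq_Ico]
      apply Finset.sum_congr rfl
      intro n hn
      simp only [Finset.mem_range] at hn
      exact min_eq_left (hmono n (by omega))
    · rw [Finset.sum_Ico_eq_sum_range]
      have h4 : 2 * m + 1 - (m + 1) = m := by omega
      rw [h4]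
      apply Finset.sum_congr rfl
      intro n hn
      simp only [Finset.mem_range] at hn
      rw [min_eq_right (hdec (m + 1 + n) (by omega) (by omega))]
      congr 1; omega
  have htot : ∑ k ∈ Finset.range (2 * m + 2), (2 * m + 1).choose k = 2 ^ (2 * m + 1) :=
    Nat.sum_range_choose (2 * m + 1)
  have htotsplit : ∑ k ∈ Finset.range (2 * m + 2), (2 * m + 1).choose k
      = (∑ n ∈ Finset.range (m + 1), (2 * m + 1).choose n) + (2 * m + 1).choose (m + 1)
        + ∑ n ∈ Finset.range m, (2 * m + 1).choose (m + 2 + n) := by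
    rw [Finset.range_eq_Ico, ← Finset.sum_Ico_consecutive _ (by omega : 0 ≤ m + 2)
      (by omega : m + 2 ≤ 2 * m + 2)]
    congr 1
    · rw [← Finset.range_eq_Ico, Finset.sum_range_succ]
    · rw [Finset.sum_Ico_eq_sum_range]
      have h4 : 2 * m + 2 - (m + 2) = m := by omega
      rw [h4]
  omega

theorem overlap_bound_odd (m : ℕ) :
    (1 : ℝ) / 2 ^ (2 * m + 1) *
        ∑ n ∈ Finset.range (2 * m + 1),
          Real.sqrt ((((2 * m + 1).choose n : ℝ)) * (((2 * m + 1).choose (n + 1) : ℝ)))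
      ≥ 1 - ((2 * m + 1).choose (m + 1) : ℝ) / 2 ^ (2 * m + 1) := by
  have hterm : ∀ n ∈ Finset.range (2 * m + 1),
      ((min ((2 * m + 1).choose n) ((2 * m + 1).choose (n + 1)) : ℕ) : ℝ)
        ≤ Real.sqrt ((((2 * m + 1).choose n : ℝ)) * (((2 * m + 1).choose (n + 1) : ℝ))) := by
    intro n _
    set a := (2 * m + 1).choose n
    set b := (2 * m + 1).choose (n + 1)
    have hsq : min a b * min a b ≤ a * b :=
      Nat.mul_le_mul (min_le_left a b) (min_le_right a b)
    have : ((min a b : ℕ) : ℝ) = Real.sqrt (((min a b : ℕ) : ℝ) * ((min a b : ℕ) : ℝ)) :=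
      (Real.sqrt_mul_self (by positivity)).symm
    rw [this]
    apply Real.sqrt_le_sqrt
    have := (Nat.cast_le (α := ℝ)).2 hsq
    push_cast at this ⊢
    linarith
  have hS : ((∑ n ∈ Finset.range (2 * m + 1),
      min ((2 * m + 1).choose n) ((2 * m + 1).choose (n + 1)) : ℕ) : ℝ)
      ≤ ∑ n ∈ Finset.range (2 * m + 1),
          Real.sqrt ((((2 * m + 1).choose n : ℝ)) * (((2 * m + 1).choose (n + 1) : ℝ))) := by
    rw [Nat.cast_sum]
    exact Finset.sum_le_sum hterm
  have hsum := odd_choose_min_sum m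
  have hsumR : ((∑ n ∈ Finset.range (2 * m + 1),
      min ((2 * m + 1).choose n) ((2 * m + 1).choose (n + 1)) : ℕ) : ℝ)
      + ((2 * m + 1).choose (m + 1) : ℝ) = 2 ^ (2 * m + 1) := by
    exact_mod_cast congrArg (Nat.cast (R := ℝ)) hsum
  have h2 : (0 : ℝ) < 2 ^ (2 * m + 1) := by positivity
  rw [ge_iff_le]
  rw [sub_le_iff_le_add, one_div, inv_mul_eq_div, ← add_div, le_div_iff₀ h2]
  linarith
end

section
/- The sequence a_L := (1/2^L) · Σ_{n=0}^{L−1} √( C(L,n) · C(L,n+1) ), indexed by natural numbers L ≥ 1, converges to 1 as L → ∞, where C(L,n) is the binomial coefficient and the square roots are of real numbers. -/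
open Finset

private lemma cbA (m : ℕ) : (2*m+1) * (Nat.centralBinom m)^2 ≤ 16 ^ m := by
  induction m with
  | zero => simp [Nat.centralBinom]
  | succ m ih =>
    have h := Nat.succ_mul_centralBinom_succ m
    have hcancel : (m+1)^2 * ((2*(m+1)+1) * (Nat.centralBinom (m+1))^2)
        ≤ (m+1)^2 * 16 ^ (m+1) := by
      have h2 : ((m+1) * Nat.centralBinom (m+1))^2
          = 4*(2*m+1)^2*(Nat.centralBinom m)^2 := by rw [h]; ring
      calc (m+1)^2 * ((2*(m+1)+1) * (Nat.centralBinom (m+1))^2)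
          = (2*(m+1)+1) * (((m+1) * Nat.centralBinom (m+1))^2) := by ring
        _ = (4*(2*m+1)*(2*m+3)) * ((2*m+1) * (Nat.centralBinom m)^2) := by rw [h2]; ring
        _ ≤ (4*(2*m+1)*(2*m+3)) * 16^m := Nat.mul_le_mul_left _ ih
        _ ≤ (16*(m+1)^2) * 16^m := Nat.mul_le_mul_right _ (by nlinarith)
        _ = (m+1)^2 * 16^(m+1) := by ring
    exact Nat.le_of_mul_le_mul_left hcancel (by positivity)

private lemma cbB (L : ℕ) : (L+1) * (L.choose (L/2))^2 ≤ 4 ^ L := by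
  rcases Nat.even_or_odd L with ⟨m, hm⟩ | ⟨m, hm⟩
  · have hL : L = 2*m := by omega
    subst hL
    have hdiv : 2*m/2 = m := by omega
    rw [hdiv]
    have : (2*m).choose m = Nat.centralBinom m := rfl
    rw [this]
    calc (2*m+1) * (Nat.centralBinom m)^2 ≤ 16^m := cbA m
      _ = 4^(2*m) := by rw [pow_mul]; norm_num
  · subst hm
    have hdiv : (2*m+1)/2 = m := by omega
    rw [hdiv]
    have hcb : Nat.centralBinom (m+1) = 2 * ((2*m+1).choose m) := by
      have : Nat.centralBinom (m+1) = (2*m+2).choose (m+1) := by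
        unfold Nat.centralBinom; ring_nf
      rw [this, Nat.choose_succ_succ, Nat.choose_symm_half]
      omega
    have h1 : 4 * ((2*m+1+1) * ((2*m+1).choose m)^2)
        = (2*m+2) * (Nat.centralBinom (m+1))^2 := by rw [hcb]; ring
    have h2 : (2*m+2) * (Nat.centralBinom (m+1))^2
        ≤ (2*(m+1)+1) * (Nat.centralBinom (m+1))^2 :=
      Nat.mul_le_mul_right _ (by omega)
    have h3 := cbA (m+1)
    have h4 : (16:ℕ)^(m+1) = 4 * 4^(2*m+1) := by
      rw [show (16:ℕ) = 4^2 by norm_num, ← pow_mul]; ring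
    have key : 4 * ((2*m+1+1) * ((2*m+1).choose m)^2) ≤ 4 * 4^(2*m+1) := by
      calc 4 * ((2*m+1+1) * ((2*m+1).choose m)^2)
          = (2*m+2) * (Nat.centralBinom (m+1))^2 := h1
        _ ≤ (2*(m+1)+1) * (Nat.centralBinom (m+1))^2 := h2
        _ ≤ 16^(m+1) := h3
        _ = 4 * 4^(2*m+1) := h4
    exact Nat.le_of_mul_le_mul_left key (by norm_num)

private lemma cbR (L : ℕ) : (L.choose (L/2) : ℝ) * Real.sqrt (L+1) ≤ 2 ^ L := by
  have h := cbB L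
  have h' : ((L:ℝ)+1) * ((L.choose (L/2) : ℝ))^2 ≤ (4:ℝ) ^ L := by exact_mod_cast h
  have key : (L.choose (L/2) : ℝ) * Real.sqrt (L+1)
      = Real.sqrt (((L:ℝ)+1) * ((L.choose (L/2) : ℝ))^2) := by
    rw [Real.sqrt_mul (by positivity), Real.sqrt_sq (by positivity)]
    ring
  rw [key]
  calc Real.sqrt (((L:ℝ)+1) * ((L.choose (L/2) : ℝ))^2)
      ≤ Real.sqrt ((4:ℝ)^L) := Real.sqrt_le_sqrt h'
    _ = 2^L := by
        rw [show (4:ℝ)^L = ((2:ℝ)^L)^2 by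
          rw [← pow_mul, mul_comm, pow_mul]; norm_num]
        exact Real.sqrt_sq (by positivity)

private lemma min_le_sqrt_mul {a b : ℝ} (ha : 0 ≤ a) (hb : 0 ≤ b) :
    min a b ≤ Real.sqrt (a*b) := by
  have h : (min a b)^2 ≤ a*b := by
    rcases le_total a b with h | h
    · rw [min_eq_left h]; nlinarith
    · rw [min_eq_right h]; nlinarith
  calc min a b = Real.sqrt ((min a b)^2) := (Real.sqrt_sq (le_min ha hb)).symm
    _ ≤ Real.sqrt (a*b) := Real.sqrt_le_sqrt h

private lemma sqrt_mul_le {a b : ℝ} (ha : 0 ≤ a) (hb : 0 ≤ b) :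
    Real.sqrt (a*b) ≤ (a+b)/2 := by
  have h : a*b ≤ ((a+b)/2)^2 := by nlinarith [sq_nonneg (a-b)]
  calc Real.sqrt (a*b) ≤ Real.sqrt (((a+b)/2)^2) := Real.sqrt_le_sqrt h
    _ = (a+b)/2 := Real.sqrt_sq (by positivity)

private lemma choose_dec (L n : ℕ) (h : L/2 ≤ n) : L.choose (n+1) ≤ L.choose n := by
  rcases le_or_gt L n with hn | hn
  · rw [Nat.choose_eq_zero_of_lt (by omega)]; exact Nat.zero_le _
  · rw [← Nat.choose_symm (show n+1 ≤ L by omega), ← Nat.choose_symm hn.le]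
    rcases lt_or_ge (L - (n+1)) (L/2) with hr | hr
    · have heq : L - n = (L - (n+1)) + 1 := by omega
      rw [heq]
      exact Nat.choose_le_succ_of_lt_half_left hr
    · have hLn : L = 2*n+1 := by omega
      have e1 : L - (n+1) = n := by omega
      have e2 : L - n = n+1 := by omega
      rw [e1, e2, hLn]
      exact (Nat.choose_symm_half n).ge

private lemma s1 (L : ℕ) : ∑ n ∈ range L, (L.choose n : ℝ) = 2^L - 1 := by
  have h : ∑ n ∈ range (L+1), (L.choose n : ℝ) = 2^L := by
    exact_mod_cast congrArg (Nat.cast : ℕ → ℝ) (Nat.sum_range_choose L)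
  rw [Finset.sum_range_succ, Nat.choose_self] at h
  push_cast at h
  linarith

private lemma s2 (L : ℕ) : ∑ n ∈ range L, (L.choose (n+1) : ℝ) = 2^L - 1 := by
  have h : ∑ n ∈ range (L+1), (L.choose n : ℝ) = 2^L := by
    exact_mod_cast congrArg (Nat.cast : ℕ → ℝ) (Nat.sum_range_choose L)
  rw [Finset.sum_range_succ'] at h
  rw [Nat.choose_zero_right] at h
  push_cast at h
  linarith

private lemma Tbound (L : ℕ) :
    ∑ n ∈ range L, |(L.choose (n+1) : ℝ) - L.choose n| ≤ 2 * L.choose (L/2) := by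
  set k := L/2 with hk
  have hkL : k ≤ L := Nat.div_le_self _ _
  rw [Finset.range_eq_Ico, ← Finset.sum_Ico_consecutive _ (Nat.zero_le k) hkL]
  have hfirst : ∑ n ∈ Finset.Ico 0 k, |(L.choose (n+1) : ℝ) - L.choose n|
      = (L.choose k : ℝ) - L.choose 0 := by
    rw [← Finset.range_eq_Ico]
    rw [show (∑ n ∈ range k, |(L.choose (n+1) : ℝ) - L.choose n|)
        = ∑ n ∈ range k, ((L.choose (n+1) : ℝ) - L.choose n) from ?_]
    · exact Finset.sum_range_sub (fun n => (L.choose n : ℝ)) k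
    · apply Finset.sum_congr rfl
      intro n hn
      rw [Finset.mem_range] at hn
      have : L.choose n ≤ L.choose (n+1) :=
        Nat.choose_le_succ_of_lt_half_left hn
      rw [abs_of_nonneg (sub_nonneg.2 (by exact_mod_cast this))]
  have hsecond : ∑ n ∈ Finset.Ico k L, |(L.choose (n+1) : ℝ) - L.choose n|
      = (L.choose k : ℝ) - L.choose L := by
    rw [Finset.sum_Ico_eq_sum_range]
    rw [show (∑ i ∈ range (L - k), |(L.choose (k+i+1) : ℝ) - L.choose (k+i)|)
        = ∑ i ∈ range (L - k), ((L.choose (k+i) : ℝ) - L.choose (k+i+1)) from ?_]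
    · have := Finset.sum_range_sub' (fun i => (L.choose (k+i) : ℝ)) (L - k)
      simp only [← add_assoc] at this
      rw [this, Nat.add_zero, Nat.add_sub_cancel' hkL]
    · apply Finset.sum_congr rfl
      intro i _
      have : L.choose (k+i+1) ≤ L.choose (k+i) :=
        choose_dec L (k+i) (by omega)
      rw [abs_of_nonpos (sub_nonpos.2 (by exact_mod_cast this)), neg_sub]
  rw [hfirst, hsecond, Nat.choose_zero_right, Nat.choose_self]
  push_cast
  linarith [show (0:ℝ) ≤ (L.choose k : ℝ) from by positivity]

theorem overlap_tendsto_one :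
    Filter.Tendsto
      (fun L : ℕ => (1 : ℝ) / 2 ^ L *
        ∑ n ∈ Finset.range L,
          Real.sqrt (((L.choose n : ℝ)) * ((L.choose (n + 1) : ℝ))))
      Filter.atTop (nhds 1) := by
  set a : ℕ → ℝ := fun L => (1 : ℝ) / 2 ^ L *
      ∑ n ∈ Finset.range L, Real.sqrt (((L.choose n : ℝ)) * ((L.choose (n + 1) : ℝ))) with ha
  have hupper : ∀ L, a L ≤ 1 := by
    intro L
    have hS : ∑ n ∈ range L, Real.sqrt ((L.choose n : ℝ) * (L.choose (n+1) : ℝ))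
        ≤ 2^L - 1 := by
      calc ∑ n ∈ range L, Real.sqrt ((L.choose n : ℝ) * (L.choose (n+1) : ℝ))
          ≤ ∑ n ∈ range L, ((L.choose n : ℝ) + (L.choose (n+1) : ℝ))/2 := by
            apply Finset.sum_le_sum
            intro n _
            exact sqrt_mul_le (Nat.cast_nonneg _) (Nat.cast_nonneg _)
        _ = ((∑ n ∈ range L, (L.choose n : ℝ)) + ∑ n ∈ range L, (L.choose (n+1) : ℝ))/2 := by
            rw [← Finset.sum_add_distrib, ← Finset.sum_div]
        _ = 2^L - 1 := by rw [s1, s2]; ring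
    have h2 : (0:ℝ) < 2^L := by positivity
    have haL : a L = (∑ n ∈ range L,
        Real.sqrt ((L.choose n : ℝ) * (L.choose (n+1) : ℝ))) / 2^L := by
      rw [ha]; ring
    rw [haL, div_le_one h2]
    linarith
  have hlower : ∀ L : ℕ, 1 - 1/2^L - 1/Real.sqrt (L+1) ≤ a L := by
    intro L
    have h2 : (0:ℝ) < 2^L := by positivity
    have hs : (0:ℝ) < Real.sqrt (L+1) := Real.sqrt_pos.2 (by positivity)
    have hS : (2:ℝ)^L - 1 - (L.choose (L/2) : ℝ)
        ≤ ∑ n ∈ range L, Real.sqrt ((L.choose n : ℝ) * (L.choose (n+1) : ℝ)) := by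
      have hmin : ∀ n ∈ range L,
          ((L.choose n : ℝ) + (L.choose (n+1) : ℝ))/2
            - |(L.choose (n+1) : ℝ) - (L.choose n : ℝ)|/2
          ≤ Real.sqrt ((L.choose n : ℝ) * (L.choose (n+1) : ℝ)) := by
        intro n _
        have := min_le_sqrt_mul (show (0:ℝ) ≤ (L.choose n : ℝ) by positivity)
          (show (0:ℝ) ≤ (L.choose (n+1) : ℝ) by positivity)
        have hmeq : min ((L.choose n : ℝ)) ((L.choose (n+1) : ℝ))
            = ((L.choose n : ℝ) + (L.choose (n+1) : ℝ))/2
              - |(L.choose (n+1) : ℝ) - (L.choose n : ℝ)|/2 := by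
          rcases le_total ((L.choose n : ℝ)) ((L.choose (n+1) : ℝ)) with h | h
          · rw [min_eq_left h, abs_of_nonneg (by linarith)]; ring
          · rw [min_eq_right h, abs_of_nonpos (by linarith)]; ring
        linarith [hmeq ▸ this]
      calc (2:ℝ)^L - 1 - (L.choose (L/2) : ℝ)
          ≤ ((2^L - 1) + (2^L - 1))/2 - (2 * L.choose (L/2) : ℝ)/2 := by push_cast; ring_nf; linarith
        _ ≤ ∑ n ∈ range L, (((L.choose n : ℝ) + (L.choose (n+1) : ℝ))/2
              - |(L.choose (n+1) : ℝ) - (L.choose n : ℝ)|/2) := by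
            rw [Finset.sum_sub_distrib, ← Finset.sum_div, ← Finset.sum_div,
              Finset.sum_add_distrib, s1, s2]
            have := Tbound L
            push_cast at this ⊢
            linarith
        _ ≤ _ := Finset.sum_le_sum hmin
    have hCk : (L.choose (L/2) : ℝ)/2^L ≤ 1/Real.sqrt (L+1) := by
      rw [div_le_div_iff₀ h2 hs]
      have := cbR L
      linarith
    have haL : a L = (∑ n ∈ range L,
        Real.sqrt ((L.choose n : ℝ) * (L.choose (n+1) : ℝ))) / 2^L := by
      rw [ha]; ring
    rw [haL, le_div_iff₀ h2]
    have e1 : (1/(2:ℝ)^L) * 2^L = 1 := by field_simp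
    have e2 : (L.choose (L/2):ℝ) ≤ 1/Real.sqrt (L+1) * 2^L := (div_le_iff₀ h2).mp hCk
    have expand : (1 - 1/(2:ℝ)^L - 1/Real.sqrt (L+1)) * 2^L
        = 2^L - (1/(2:ℝ)^L)*2^L - (1/Real.sqrt (L+1))*2^L := by ring
    linarith
  have hg : Filter.Tendsto (fun L : ℕ => 1 - 1/(2:ℝ)^L - 1/Real.sqrt (L+1))
      Filter.atTop (nhds 1) := by
    have h1 : Filter.Tendsto (fun L : ℕ => 1/(2:ℝ)^L) Filter.atTop (nhds 0) := by
      have : (fun L : ℕ => 1/(2:ℝ)^L) = fun L : ℕ => ((1:ℝ)/2)^L := by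
        funext L; rw [div_pow, one_pow]
      rw [this]
      exact tendsto_pow_atTop_nhds_zero_of_lt_one (by norm_num) (by norm_num)
    have h2 : Filter.Tendsto (fun L : ℕ => 1/Real.sqrt (L+1)) Filter.atTop (nhds 0) := by
      have hcomp : Filter.Tendsto (fun L : ℕ => Real.sqrt (1/((L:ℝ)+1)))
          Filter.atTop (nhds 0) := by
        have := (Real.continuous_sqrt.tendsto 0).comp
          tendsto_one_div_add_atTop_nhds_zero_nat
        simpa [Function.comp_def] using this
      have heq : (fun L : ℕ => 1/Real.sqrt (L+1))
          = fun L : ℕ => Real.sqrt (1/((L:ℝ)+1)) := by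
        funext L
        rw [one_div, one_div, Real.sqrt_inv]
      rw [heq]
      exact hcomp
    have := (tendsto_const_nhds (x := (1:ℝ)) (f := Filter.atTop (α := ℕ))).sub h1 |>.sub h2
    simpa using this
  exact tendsto_of_tendsto_of_tendsto_of_le_of_le hg tendsto_const_nhds hlower hupper
end

section
/- For all natural numbers m and L with m ≤ L, the following inequality holds: (1/2^L) · Σ_{n=0}^{L−m} √( C(L,n) · C(L,n+m) ) ≥ 1 − m · C(L, ⌊L/2⌋)/2^L, where C(L,n) is the binomial coefficient and the square roots are of real numbers. -/
private lemma choose_mono_half {L a b : ℕ} (hab : a ≤ b) (hb : b ≤ L / 2) :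
    L.choose a ≤ L.choose b := by
  induction b with
  | zero => simp_all
  | succ b ih =>
    rcases Nat.eq_or_lt_of_le hab with rfl | h
    · exact le_rfl
    · exact le_trans (ih (Nat.lt_succ_iff.mp h) (le_trans (Nat.le_succ b) hb))
        (Nat.choose_le_succ_of_lt_half_left (Nat.lt_of_lt_of_le (Nat.lt_succ_self b) hb))

private lemma choose_le_choose_aux {L a b : ℕ} (hb : b ≤ L) (h1 : a ≤ b) (h2 : a + b ≤ L) :
    L.choose a ≤ L.choose b := by
  rcases le_or_gt b (L / 2) with hb2 | hb2
  · exact choose_mono_half h1 hb2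
  · rw [← Nat.choose_symm hb]
    exact choose_mono_half (by omega) (by omega)

private lemma sum_min_bound (m L : ℕ) (hmL : m ≤ L) :
    2 ^ L ≤ m * L.choose (L / 2) +
      ∑ n ∈ Finset.range (L - m + 1),
        (if 2 * n + m ≤ L then L.choose n else L.choose (n + m)) := by
  set t := (L - m) / 2 + 1 with ht
  have htle : t ≤ L - m + 1 := by omega
  rw [Finset.range_eq_Ico, ← Finset.sum_Ico_consecutive _ (Nat.zero_le t) htle]
  have h1 : ∑ n ∈ Finset.Ico 0 t,
      (if 2 * n + m ≤ L then L.choose n else L.choose (n + m)) =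
      ∑ n ∈ Finset.Ico 0 t, L.choose n := by
    refine Finset.sum_congr rfl fun n hn => ?_
    have := (Finset.mem_Ico.mp hn).2
    rw [if_pos (by omega)]
  have h2 : ∑ n ∈ Finset.Ico t (L - m + 1),
      (if 2 * n + m ≤ L then L.choose n else L.choose (n + m)) =
      ∑ n ∈ Finset.Ico t (L - m + 1), L.choose (n + m) := by
    refine Finset.sum_congr rfl fun n hn => ?_
    have := (Finset.mem_Ico.mp hn).1
    rw [if_neg (by omega)]
  have h3 : ∑ n ∈ Finset.Ico t (L - m + 1), L.choose (n + m) =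
      ∑ j ∈ Finset.Ico (t + m) (L + 1), L.choose j := by
    have := Finset.sum_Ico_add (fun j => L.choose j) t (L - m + 1) m
    simp only [add_comm m] at this
    have hLm : L - m + 1 + m = L + 1 := by omega
    rw [this, hLm]
  rw [h1, h2, h3]
  have hmid : ∑ j ∈ Finset.Ico t (t + m), L.choose j ≤ m * L.choose (L / 2) := by
    calc ∑ j ∈ Finset.Ico t (t + m), L.choose j
        ≤ (Finset.Ico t (t + m)).card • L.choose (L / 2) :=
          Finset.sum_le_card_nsmul _ _ _ (fun x _ => Nat.choose_le_middle x L)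
      _ = m * L.choose (L / 2) := by
          rw [Nat.card_Ico, Nat.add_sub_cancel_left, smul_eq_mul]
  have hsplit : ∑ n ∈ Finset.Ico 0 t, L.choose n +
      (∑ j ∈ Finset.Ico t (t + m), L.choose j +
        ∑ j ∈ Finset.Ico (t + m) (L + 1), L.choose j) = 2 ^ L := by
    rw [Finset.sum_Ico_consecutive _ (by omega : t ≤ t + m) (by omega : t + m ≤ L + 1),
      Finset.sum_Ico_consecutive _ (Nat.zero_le t) (by omega : t ≤ L + 1),
      ← Finset.range_eq_Ico, Nat.sum_range_choose]
  omega

theorem overlap_bound_shift (m L : ℕ) (hmL : m ≤ L) :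
    (1 : ℝ) / 2 ^ L *
        ∑ n ∈ Finset.range (L - m + 1),
          Real.sqrt (((L.choose n : ℝ)) * ((L.choose (n + m) : ℝ)))
      ≥ 1 - (m : ℝ) * (L.choose (L / 2) : ℝ) / 2 ^ L := by
  have h2L : (0 : ℝ) < 2 ^ L := by positivity
  have hterm : ∀ n ∈ Finset.range (L - m + 1),
      (if 2 * n + m ≤ L then ((L.choose n : ℕ) : ℝ) else ((L.choose (n + m) : ℕ) : ℝ)) ≤
        Real.sqrt (((L.choose n : ℝ)) * ((L.choose (n + m) : ℝ))) := by
    intro n hn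
    have hn' : n ≤ L - m := Nat.lt_succ_iff.mp (Finset.mem_range.mp hn)
    have hnm : n + m ≤ L := by omega
    split_ifs with h
    · have hle : L.choose n ≤ L.choose (n + m) :=
        choose_le_choose_aux hnm (by omega) (by omega)
      rw [Real.le_sqrt (by positivity) (by positivity), sq]
      exact mul_le_mul_of_nonneg_left (Nat.cast_le.mpr hle) (by positivity)
    · have hle : L.choose (n + m) ≤ L.choose n := by
        rw [← Nat.choose_symm hnm]
        exact choose_le_choose_aux (by omega) (by omega) (by omega)
      rw [Real.le_sqrt (by positivity) (by positivity), sq]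
      exact mul_le_mul_of_nonneg_right (Nat.cast_le.mpr hle) (by positivity)
  have key : (2 : ℝ) ^ L ≤ (m : ℝ) * (L.choose (L / 2) : ℝ) +
      ∑ n ∈ Finset.range (L - m + 1),
        Real.sqrt (((L.choose n : ℝ)) * ((L.choose (n + m) : ℝ))) := by
    have hN := sum_min_bound m L hmL
    have hcast : ((2 ^ L : ℕ) : ℝ) ≤
        (((m * L.choose (L / 2) +
          ∑ n ∈ Finset.range (L - m + 1),
            (if 2 * n + m ≤ L then L.choose n else L.choose (n + m)) : ℕ)) : ℝ) :=
      Nat.cast_le.mpr hN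
    push_cast at hcast
    calc (2 : ℝ) ^ L ≤ (m : ℝ) * (L.choose (L / 2) : ℝ) +
        ∑ n ∈ Finset.range (L - m + 1),
          (if 2 * n + m ≤ L then ((L.choose n : ℕ) : ℝ) else ((L.choose (n + m) : ℕ) : ℝ)) := by
          convert hcast using 2
      _ ≤ _ := add_le_add le_rfl (Finset.sum_le_sum hterm)
  rw [ge_iff_le, one_div_mul_eq_div, sub_le_iff_le_add, ← add_div,
    le_div_iff₀ h2L, one_mul]
  linarith [key]
end

section
/- For every fixed natural number m, the sequence b_L := (1/2^L) · Σ_{n=0}^{L−m} √( C(L,n) · C(L,n+m) ), indexed by natural numbers L ≥ m, converges to 1 as L → ∞, where C(L,n) is the binomial coefficient and the square roots are of real numbers. -/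
open Finset Filter Real

private lemma centralBinom_sq_le (n : ℕ) :
    (Nat.centralBinom n) ^ 2 * (2 * n + 1) ≤ 16 ^ n := by
  induction n with
  | zero => simp [Nat.centralBinom]
  | succ n ih =>
    have hrec := Nat.succ_mul_centralBinom_succ n
    have h1 : Nat.centralBinom (n + 1) ^ 2 * (2 * (n + 1) + 1) * (n + 1) ^ 2
        = (2 * (2 * n + 1) * Nat.centralBinom n) ^ 2 * (2 * (n + 1) + 1) := by
      rw [← hrec]; ring
    have h3 : (2 * (2 * n + 1) * Nat.centralBinom n) ^ 2 * (2 * (n + 1) + 1)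
        ≤ 16 ^ (n + 1) * (n + 1) ^ 2 := by
      calc (2 * (2 * n + 1) * Nat.centralBinom n) ^ 2 * (2 * (n + 1) + 1)
          = 4 * ((2 * n + 1) * (2 * n + 3)) * (Nat.centralBinom n ^ 2 * (2 * n + 1)) := by
            ring
        _ ≤ 4 * ((2 * n + 1) * (2 * n + 3)) * 16 ^ n := Nat.mul_le_mul_left _ ih
        _ ≤ 4 * ((2 * n + 2) * (2 * n + 2)) * 16 ^ n := by
            have : (2 * n + 1) * (2 * n + 3) ≤ (2 * n + 2) * (2 * n + 2) := by nlinarith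
            exact Nat.mul_le_mul_right _ (Nat.mul_le_mul_left _ this)
        _ = 16 ^ (n + 1) * (n + 1) ^ 2 := by ring
    exact Nat.le_of_mul_le_mul_right (h1 ▸ h3) (by positivity)

private lemma choose_half_sq_le (L : ℕ) :
    (L.choose (L / 2)) ^ 2 * (L + 1) ≤ 4 ^ L := by
  rcases Nat.even_or_odd L with ⟨k, hk⟩ | ⟨k, hk⟩
  · have hdiv : L / 2 = k := by omega
    have hc : L.choose (L / 2) = Nat.centralBinom k := by
      rw [hdiv, Nat.centralBinom]; congr 1; omega
    rw [hc]
    have h16 : (16 : ℕ) ^ k = 4 ^ L := by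
      rw [show (16 : ℕ) = 4 ^ 2 by norm_num, ← pow_mul, show 2 * k = L by omega]
    have := centralBinom_sq_le k
    calc Nat.centralBinom k ^ 2 * (L + 1) = Nat.centralBinom k ^ 2 * (2 * k + 1) := by
          congr 1; omega
      _ ≤ 16 ^ k := this
      _ = 4 ^ L := h16
  · -- L = 2k+1
    have hdiv : L / 2 = k := by omega
    have hs : L.choose (k + 1) = L.choose k := by
      rw [← Nat.choose_symm (show k + 1 ≤ L by omega)]; congr 1; omega
    have hd : Nat.centralBinom (k + 1) = 2 * L.choose k := by
      rw [Nat.centralBinom, show 2 * (k + 1) = L + 1 by omega, Nat.choose_succ_succ, hs]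
      omega
    have h := centralBinom_sq_le (k + 1)
    rw [hd] at h
    rw [hdiv]
    refine Nat.le_of_mul_le_mul_right ?_ (show 0 < 4 by norm_num)
    calc L.choose k ^ 2 * (L + 1) * 4
        = (2 * L.choose k) ^ 2 * (L + 1) := by ring
      _ ≤ (2 * L.choose k) ^ 2 * (2 * (k + 1) + 1) := Nat.mul_le_mul_left _ (by omega)
      _ ≤ 16 ^ (k + 1) := h
      _ = 4 ^ L * 4 := by
          rw [show (16 : ℕ) = 4 ^ 2 by norm_num, ← pow_mul,
            show 2 * (k + 1) = L + 1 by omega, pow_succ]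

private lemma choose_half_mul_sqrt_le (L : ℕ) :
    (L.choose (L / 2) : ℝ) * Real.sqrt (L + 1) ≤ 2 ^ L := by
  have hcast : ((L.choose (L / 2) : ℝ)) ^ 2 * ((L : ℝ) + 1) ≤ 4 ^ L := by
    exact_mod_cast choose_half_sq_le L
  have ha : (0 : ℝ) ≤ (L.choose (L / 2) : ℝ) * Real.sqrt (L + 1) := by positivity
  have hb : (0 : ℝ) ≤ (2 : ℝ) ^ L := by positivity
  have hsq : ((L.choose (L / 2) : ℝ) * Real.sqrt (L + 1)) ^ 2 ≤ ((2 : ℝ) ^ L) ^ 2 := by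
    have h1 : (Real.sqrt ((L : ℝ) + 1)) ^ 2 = (L : ℝ) + 1 :=
      Real.sq_sqrt (by positivity)
    have h2 : ((2 : ℝ) ^ L) ^ 2 = 4 ^ L := by
      rw [← pow_mul, mul_comm, pow_mul]; norm_num
    rw [mul_pow, h1, h2]; exact hcast
  calc (L.choose (L / 2) : ℝ) * Real.sqrt (L + 1)
      = Real.sqrt (((L.choose (L / 2) : ℝ) * Real.sqrt (L + 1)) ^ 2) :=
        (Real.sqrt_sq ha).symm
    _ ≤ Real.sqrt (((2 : ℝ) ^ L) ^ 2) := Real.sqrt_le_sqrt hsq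
    _ = 2 ^ L := Real.sqrt_sq hb

private lemma choose_mono_inc {L j : ℕ} (h : j < L - L / 2) :
    L.choose j ≤ L.choose (j + 1) := by
  by_cases hj : j < L / 2
  · exact Nat.choose_le_succ_of_lt_half_left hj
  · have hj' : j = L / 2 := by omega
    have : L.choose (j + 1) = L.choose j := by
      rw [← Nat.choose_symm (show j + 1 ≤ L by omega)]; congr 1; omega
    omega

private lemma choose_mono_dec {L j : ℕ} (h : L - L / 2 ≤ j) :
    L.choose (j + 1) ≤ L.choose j := by
  by_cases hjL : L ≤ j
  · rw [Nat.choose_eq_zero_of_lt (by omega)]; exact Nat.zero_le _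
  · push_neg at hjL
    have h1 := choose_mono_inc (L := L) (j := L - j - 1) (by omega)
    rw [show L - j - 1 + 1 = L - j by omega] at h1
    rw [← Nat.choose_symm (show j + 1 ≤ L by omega),
      ← Nat.choose_symm (show j ≤ L by omega)]
    rw [show L - (j + 1) = L - j - 1 by omega]
    exact h1

private lemma total_variation_le (L : ℕ) :
    ∑ j ∈ range L, |((L.choose (j + 1) : ℝ)) - (L.choose j : ℝ)|
      ≤ 2 * (L.choose (L / 2) : ℝ) := by
  set a : ℕ → ℝ := fun j => (L.choose j : ℝ) with ha
  set c : ℕ := L - L / 2 with hc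
  have hcL : c ≤ L := Nat.sub_le _ _
  have hac : a c = (L.choose (L / 2) : ℝ) := by
    simp only [ha, hc]
    exact_mod_cast congrArg (Nat.cast (R := ℝ)) (Nat.choose_symm (Nat.div_le_self L 2))
  have ha0 : a 0 = 1 := by simp [ha]
  have haL : a L = 1 := by simp [ha]
  have hsplit : ∑ j ∈ range L, |a (j + 1) - a j|
      = ∑ j ∈ range c, |a (j + 1) - a j| + ∑ j ∈ Ico c L, |a (j + 1) - a j| := by
    rw [range_eq_Ico, ← Finset.sum_Ico_consecutive _ (Nat.zero_le c) hcL, ← range_eq_Ico]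
  have h1 : ∑ j ∈ range c, |a (j + 1) - a j| ≤ (L.choose (L / 2) : ℝ) := by
    have he : ∀ j ∈ range c, |a (j + 1) - a j| = a (j + 1) - a j := by
      intro j hj
      have := choose_mono_inc (L := L) (j := j) (by simpa [hc] using mem_range.1 hj)
      exact abs_of_nonneg (sub_nonneg.2 (by simp only [ha]; exact_mod_cast this))
    rw [Finset.sum_congr rfl he, Finset.sum_range_sub a c, hac, ha0]
    linarith
  have h2 : ∑ j ∈ Ico c L, |a (j + 1) - a j| ≤ (L.choose (L / 2) : ℝ) := by
    have he : ∀ j ∈ Ico c L, |a (j + 1) - a j| = a j - a (j + 1) := by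
      intro j hj
      have := choose_mono_dec (L := L) (j := j) (mem_Ico.1 hj).1
      rw [abs_sub_comm]
      exact abs_of_nonneg (sub_nonneg.2 (by simp only [ha]; exact_mod_cast this))
    rw [Finset.sum_congr rfl he, Finset.sum_Ico_eq_sub _ hcL,
      Finset.sum_range_sub' a L, Finset.sum_range_sub' a c, hac, ha0, haL]
    linarith
  calc ∑ j ∈ range L, |a (j + 1) - a j|
      = ∑ j ∈ range c, |a (j + 1) - a j| + ∑ j ∈ Ico c L, |a (j + 1) - a j| := hsplit
    _ ≤ (L.choose (L / 2) : ℝ) + (L.choose (L / 2) : ℝ) := add_le_add h1 h2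
    _ = 2 * (L.choose (L / 2) : ℝ) := by ring

private lemma sum_shift_le (g : ℕ → ℝ) (hg : ∀ j, 0 ≤ g j) (N k : ℕ) :
    ∑ n ∈ range N, g (n + k) ≤ ∑ j ∈ range (N + k), g j := by
  calc ∑ n ∈ range N, g (n + k) = ∑ n ∈ range N, g (k + n) := by
        refine Finset.sum_congr rfl fun n _ => by rw [add_comm]
    _ ≤ ∑ x ∈ range k, g x + ∑ n ∈ range N, g (k + n) :=
        le_add_of_nonneg_left (Finset.sum_nonneg fun i _ => hg i)
    _ = ∑ j ∈ range (k + N), g j := (Finset.sum_range_add g k N).symm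
    _ = ∑ j ∈ range (N + k), g j := by rw [add_comm]

private lemma overlap_upper (m L : ℕ) (hm : m ≤ L) :
    (1 : ℝ) / 2 ^ L * ∑ n ∈ range (L - m + 1),
      Real.sqrt (((L.choose n : ℝ)) * ((L.choose (n + m) : ℝ))) ≤ 1 := by
  have h2 : (0 : ℝ) < 2 ^ L := by positivity
  rw [div_mul_eq_mul_div, one_mul, div_le_one h2]
  have hsum : ∑ n ∈ range (L + 1), (L.choose n : ℝ) = 2 ^ L := by
    exact_mod_cast congrArg (Nat.cast (R := ℝ)) (Nat.sum_range_choose L)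
  have hA : ∑ n ∈ range (L - m + 1), (L.choose n : ℝ) ≤ 2 ^ L := by
    rw [← hsum]
    exact Finset.sum_le_sum_of_subset_of_nonneg
      (Finset.range_subset_range.2 (by omega)) (fun i _ _ => Nat.cast_nonneg _)
  have hB : ∑ n ∈ range (L - m + 1), (L.choose (n + m) : ℝ) ≤ 2 ^ L := by
    calc ∑ n ∈ range (L - m + 1), (L.choose (n + m) : ℝ)
        ≤ ∑ j ∈ range (L - m + 1 + m), (L.choose j : ℝ) :=
          sum_shift_le _ (fun j => Nat.cast_nonneg _) _ _
      _ = ∑ j ∈ range (L + 1), (L.choose j : ℝ) := by rw [show L - m + 1 + m = L + 1 by omega]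
      _ = 2 ^ L := hsum
  have hstep : ∀ n ∈ range (L - m + 1),
      Real.sqrt (((L.choose n : ℝ)) * ((L.choose (n + m) : ℝ)))
        ≤ ((L.choose n : ℝ) + (L.choose (n + m) : ℝ)) / 2 := by
    intro n _
    have hx : (0 : ℝ) ≤ (L.choose n : ℝ) := Nat.cast_nonneg _
    have hy : (0 : ℝ) ≤ (L.choose (n + m) : ℝ) := Nat.cast_nonneg _
    rw [Real.sqrt_mul hx]
    nlinarith [sq_nonneg (Real.sqrt (L.choose n : ℝ) - Real.sqrt (L.choose (n + m) : ℝ)),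
      Real.sq_sqrt hx, Real.sq_sqrt hy, Real.sqrt_nonneg ((L.choose n : ℝ)),
      Real.sqrt_nonneg ((L.choose (n + m) : ℝ))]
  calc ∑ n ∈ range (L - m + 1), Real.sqrt (((L.choose n : ℝ)) * ((L.choose (n + m) : ℝ)))
      ≤ ∑ n ∈ range (L - m + 1), ((L.choose n : ℝ) + (L.choose (n + m) : ℝ)) / 2 :=
        Finset.sum_le_sum hstep
    _ = (∑ n ∈ range (L - m + 1), (L.choose n : ℝ)
          + ∑ n ∈ range (L - m + 1), (L.choose (n + m) : ℝ)) / 2 := by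
        rw [← Finset.sum_add_distrib, ← Finset.sum_div]
    _ ≤ (2 ^ L + 2 ^ L) / 2 := by gcongr
    _ = 2 ^ L := by ring

private lemma overlap_lower (m L : ℕ) (hm : m ≤ L) :
    1 - 3 * m * (Real.sqrt (L + 1))⁻¹
      ≤ (1 : ℝ) / 2 ^ L * ∑ n ∈ range (L - m + 1),
          Real.sqrt (((L.choose n : ℝ)) * ((L.choose (n + m) : ℝ))) := by
  have h2 : (0 : ℝ) < 2 ^ L := by positivity
  set M : ℝ := (L.choose (L / 2) : ℝ) with hMdef
  have hM0 : 0 ≤ M := Nat.cast_nonneg _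
  have hs : (0 : ℝ) < Real.sqrt (L + 1) := Real.sqrt_pos.2 (by positivity)
  have hMle : M ≤ 2 ^ L / Real.sqrt (L + 1) := by
    rw [le_div_iff₀ hs]; exact choose_half_mul_sqrt_le L
  set a : ℕ → ℝ := fun j => (L.choose j : ℝ) with hadef
  set d : ℕ → ℝ := fun j => |a (j + 1) - a j| with hddef
  have hd0 : ∀ j, 0 ≤ d j := fun j => abs_nonneg _
  -- pointwise lower bound
  have hpt : ∀ n ∈ range (L - m + 1),
      a n - ∑ k ∈ range m, d (n + k) ≤ Real.sqrt (a n * a (n + m)) := by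
    intro n _
    have hxn : (0 : ℝ) ≤ a n := Nat.cast_nonneg _
    have hxm : (0 : ℝ) ≤ a (n + m) := Nat.cast_nonneg _
    have hmin : min (a n) (a (n + m)) ≤ Real.sqrt (a n * a (n + m)) := by
      have h0 : 0 ≤ min (a n) (a (n + m)) := le_min hxn hxm
      have hmm : min (a n) (a (n + m)) * min (a n) (a (n + m)) ≤ a n * a (n + m) :=
        mul_le_mul (min_le_left _ _) (min_le_right _ _) h0 hxn
      calc min (a n) (a (n + m))
          = Real.sqrt (min (a n) (a (n + m)) * min (a n) (a (n + m))) :=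
            (Real.sqrt_mul_self h0).symm
        _ ≤ Real.sqrt (a n * a (n + m)) := Real.sqrt_le_sqrt hmm
    have hts : ∑ k ∈ range m, (a (n + k) - a (n + (k + 1))) = a n - a (n + m) := by
      exact Finset.sum_range_sub' (fun k => a (n + k)) m
    have htri : |a n - a (n + m)| ≤ ∑ k ∈ range m, d (n + k) := by
      calc |a n - a (n + m)| = |∑ k ∈ range m, (a (n + k) - a (n + (k + 1)))| := by rw [hts]
        _ ≤ ∑ k ∈ range m, |a (n + k) - a (n + (k + 1))| :=
          Finset.abs_sum_le_sum_abs _ _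
        _ = ∑ k ∈ range m, d (n + k) := by
          refine Finset.sum_congr rfl fun k _ => ?_
          simp only [hddef]
          exact abs_sub_comm _ _
    have hSnn : 0 ≤ ∑ k ∈ range m, d (n + k) := Finset.sum_nonneg fun k _ => hd0 _
    rcases le_total (a n) (a (n + m)) with h | h
    · calc a n - ∑ k ∈ range m, d (n + k) ≤ a n := by linarith
        _ = min (a n) (a (n + m)) := (min_eq_left h).symm
        _ ≤ _ := hmin
    · have habs : |a n - a (n + m)| = a n - a (n + m) := abs_of_nonneg (by linarith)
      calc a n - ∑ k ∈ range m, d (n + k) ≤ a n - |a n - a (n + m)| := by linarith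
        _ = a (n + m) := by rw [habs]; ring
        _ = min (a n) (a (n + m)) := (min_eq_right h).symm
        _ ≤ _ := hmin
  have hsum : ∑ n ∈ range (L - m + 1), (a n - ∑ k ∈ range m, d (n + k))
      ≤ ∑ n ∈ range (L - m + 1), Real.sqrt (a n * a (n + m)) :=
    Finset.sum_le_sum hpt
  -- bound the main part from below
  have hsumall : ∑ n ∈ range (L + 1), a n = 2 ^ L := by
    simp only [hadef]
    exact_mod_cast congrArg (Nat.cast (R := ℝ)) (Nat.sum_range_choose L)
  have hA : (2 : ℝ) ^ L - m * M ≤ ∑ n ∈ range (L - m + 1), a n := by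
    have hsplit : ∑ n ∈ range (L + 1), a n
        = ∑ n ∈ range (L - m + 1), a n + ∑ x ∈ range m, a (L - m + 1 + x) := by
      rw [← Finset.sum_range_add a (L - m + 1) m, show L - m + 1 + m = L + 1 by omega]
    have htail : ∑ x ∈ range m, a (L - m + 1 + x) ≤ m * M := by
      have := Finset.sum_le_card_nsmul (range m) (fun x => a (L - m + 1 + x)) M
        (fun x _ => by
          simp only [hadef, hMdef]
          exact_mod_cast Nat.choose_le_middle _ _)
      simpa [nsmul_eq_mul] using this
    have := hsumall
    rw [hsplit] at this
    linarith
  -- bound the error part from above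
  have hB : ∑ n ∈ range (L - m + 1), ∑ k ∈ range m, d (n + k) ≤ m * (2 * M) := by
    rw [Finset.sum_comm]
    have hk : ∀ k ∈ range m, ∑ n ∈ range (L - m + 1), d (n + k) ≤ 2 * M := by
      intro k hk
      have hkm : k < m := mem_range.1 hk
      calc ∑ n ∈ range (L - m + 1), d (n + k)
          ≤ ∑ j ∈ range (L - m + 1 + k), d j := sum_shift_le d hd0 _ _
        _ ≤ ∑ j ∈ range L, d j :=
            Finset.sum_le_sum_of_subset_of_nonneg
              (Finset.range_subset_range.2 (by omega)) (fun i _ _ => hd0 i)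
        _ ≤ 2 * M := total_variation_le L
    calc ∑ k ∈ range m, ∑ n ∈ range (L - m + 1), d (n + k)
        ≤ ∑ _k ∈ range m, 2 * M := Finset.sum_le_sum hk
      _ = m * (2 * M) := by simp [mul_comm]
  have hmain : (2 : ℝ) ^ L - 3 * m * M
      ≤ ∑ n ∈ range (L - m + 1), Real.sqrt (a n * a (n + m)) := by
    have hdist : ∑ n ∈ range (L - m + 1), (a n - ∑ k ∈ range m, d (n + k))
        = ∑ n ∈ range (L - m + 1), a n
          - ∑ n ∈ range (L - m + 1), ∑ k ∈ range m, d (n + k) :=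
      Finset.sum_sub_distrib _ _
    rw [hdist] at hsum
    linarith
  -- conclude
  rw [div_mul_eq_mul_div, one_mul, le_div_iff₀ h2]
  have h3m : (0 : ℝ) ≤ 3 * m := by positivity
  have hMM : 3 * m * M ≤ 3 * m * (2 ^ L / Real.sqrt (L + 1)) :=
    mul_le_mul_of_nonneg_left hMle h3m
  have hexp : (1 - 3 * m * (Real.sqrt (L + 1))⁻¹) * 2 ^ L
      = 2 ^ L - 3 * m * (2 ^ L / Real.sqrt (L + 1)) := by ring
  rw [hexp]
  calc (2 : ℝ) ^ L - 3 * m * (2 ^ L / Real.sqrt (L + 1))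
      ≤ 2 ^ L - 3 * m * M := by linarith
    _ ≤ ∑ n ∈ range (L - m + 1), Real.sqrt (a n * a (n + m)) := hmain

theorem overlap_shift_tendsto_one (m : ℕ) :
    Filter.Tendsto
      (fun L : ℕ => (1 : ℝ) / 2 ^ L *
        ∑ n ∈ Finset.range (L - m + 1),
          Real.sqrt (((L.choose n : ℝ)) * ((L.choose (n + m) : ℝ))))
      Filter.atTop (nhds 1) := by
  have hsqrt : Tendsto (fun L : ℕ => Real.sqrt ((L : ℝ) + 1)) atTop atTop := by
    have h1 : Tendsto Real.sqrt atTop atTop := by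
      have : Real.sqrt = fun x : ℝ => x ^ (1 / 2 : ℝ) := funext fun x => Real.sqrt_eq_rpow x
      rw [this]; exact tendsto_rpow_atTop (by norm_num)
    exact h1.comp (tendsto_atTop_add_const_right _ 1 tendsto_natCast_atTop_atTop)
  have hzero : Tendsto (fun L : ℕ => 3 * (m : ℝ) * (Real.sqrt ((L : ℝ) + 1))⁻¹)
      atTop (nhds 0) := by
    have := hsqrt.inv_tendsto_atTop
    simpa using this.const_mul (3 * (m : ℝ))
  have hg : Tendsto (fun L : ℕ => 1 - 3 * (m : ℝ) * (Real.sqrt ((L : ℝ) + 1))⁻¹)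
      atTop (nhds 1) := by
    simpa using (tendsto_const_nhds (x := (1 : ℝ)) (f := atTop)).sub hzero
  refine tendsto_of_tendsto_of_tendsto_of_le_of_le' hg tendsto_const_nhds ?_ ?_
  · filter_upwards [Filter.eventually_ge_atTop m] with L hL
    exact overlap_lower m L hL
  · filter_upwards [Filter.eventually_ge_atTop m] with L hL
    exact overlap_upper m L hL
end
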